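/- Let w be a right-infinite word over alphabet {x_1,...,x_d}, A_w its factor algebra over ℚ, x = x_1 + ··· + x_d, and Φ_n : V_n → A_w the linear map u ↦ ux − xu, where V_n is the span of length-n factors. Then the kernel of Φ_n is exactly the one-dimensional subspace spanned by x^n. -/

import Mathlib

variable {α : Type*}

/-- `u` occurs in the infinite word `w` at position `i`. -/
def FactorAt (w : ℕ → α) (i : ℕ) (u : List α) : Prop :=
  u = (List.range u.length).map fun k => w (i + k)

/-- The set of (finite) factors of the right-infinite word `w`. -/
def Fac (w : ℕ → α) : Set (List α) := {u | ∃ i, FactorAt w i u}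

/-- The relation defining the factor algebra: words that are not factors of `w`
are set to zero in the monoid algebra `ℚ⟨Σ*⟩`. -/
def FacAlgRel (w : ℕ → α) :
    MonoidAlgebra ℚ (FreeMonoid α) → MonoidAlgebra ℚ (FreeMonoid α) → Prop :=
  fun x y => ∃ u : FreeMonoid α, FreeMonoid.toList u ∉ Fac w ∧
    x = MonoidAlgebra.of ℚ (FreeMonoid α) u ∧ y = 0

/-- The factor algebra `A_w` of `w` over `ℚ`. -/
abbrev FacAlg (w : ℕ → α) := RingQuot (FacAlgRel w)

/-- The image in the factor algebra of a word `u`. -/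
noncomputable def facCls (w : ℕ → α) (u : List α) : FacAlg w :=
  RingQuot.mkAlgHom ℚ (FacAlgRel w) (MonoidAlgebra.of ℚ (FreeMonoid α) (FreeMonoid.ofList u))

/-- `V_n`: the span of the images of length-`n` factors of `w`. -/
noncomputable def Vspace (w : ℕ → α) (n : ℕ) : Submodule ℚ (FacAlg w) :=
  Submodule.span ℚ {x | ∃ u ∈ Fac w, u.length = n ∧ x = facCls w u}

/-- `W_n`: the span of commutators `ab - ba` with `a, b` factors of `w` and `|a|+|b| = n`. -/
noncomputable def Wspace (w : ℕ → α) (n : ℕ) : Submodule ℚ (FacAlg w) :=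
  Submodule.span ℚ {x | ∃ a ∈ Fac w, ∃ b ∈ Fac w, a.length + b.length = n ∧
    x = facCls w a * facCls w b - facCls w b * facCls w a}

/-! ### Auxiliary development -/

open Finsupp FreeMonoid

section Aux

variable (w : ℕ → α)

noncomputable local instance : DecidablePred (fun u : FreeMonoid α => FreeMonoid.toList u ∈ Fac w) :=
  fun _ => Classical.dec _

/-- The factor of `w` of length `m` starting at position `i`. -/
def Wd (i m : ℕ) : List α := (List.range m).map fun k => w (i + k)

lemma Wd_length (i m : ℕ) : (Wd w i m).length = m := by simp [Wd]

lemma Wd_mem (i m : ℕ) : Wd w i m ∈ Fac w :=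
  ⟨i, by simp [FactorAt, Wd]⟩

lemma eq_Wd_of_factorAt {i : ℕ} {u : List α} (h : FactorAt w i u) : u = Wd w i u.length := h

lemma fac_infix {u v : List α} (hv : v ∈ Fac w) (h : u <:+: v) : u ∈ Fac w := by
  obtain ⟨i, hi⟩ := hv
  obtain ⟨s, t, rfl⟩ := h
  refine ⟨i + s.length, ?_⟩
  rw [FactorAt]
  apply List.ext_getElem
  · simp
  · intro j hj hj'
    have hlen : (s ++ u ++ t).length = (List.range (s ++ u ++ t).length).length := by simp
    have hji : s.length + j < (s ++ u ++ t).length := by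
      simp only [List.length_append] at *; omega
    have := congrArg (fun l => l[s.length + j]? ) hi
    simp only [List.getElem?_eq_getElem, hji] at this
    rw [List.getElem?_eq_getElem (by simpa using hji)] at this
    have h1 : (s ++ u ++ t)[s.length + j]'hji = u[j]'hj := by
      rw [List.getElem_append_left (by simp only [List.length_append]; omega),
        List.getElem_append_right (by omega)]
      congr 1
      omega
    have h2 : ((List.range (s ++ u ++ t).length).map fun k => w (i + k))[s.length + j]'(by simpa using hji)
        = w (i + (s.length + j)) := by
      rw [List.getElem_map, List.getElem_range]
    rw [h1, h2] at this
    simp only [Option.some.injEq] at this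
    rw [List.getElem_map, List.getElem_range, this]
    congr 1
    omega

lemma fac_of_mul_fac {u t : FreeMonoid α} (h : FreeMonoid.toList (u * t) ∈ Fac w) :
    FreeMonoid.toList u ∈ Fac w := by
  apply fac_infix w h
  rw [FreeMonoid.toList_mul]
  exact ⟨[], FreeMonoid.toList t, by simp⟩

lemma fac_of_mul_fac' {u t : FreeMonoid α} (h : FreeMonoid.toList (t * u) ∈ Fac w) :
    FreeMonoid.toList u ∈ Fac w := by
  apply fac_infix w h
  rw [FreeMonoid.toList_mul]
  exact ⟨FreeMonoid.toList t, [], by simp⟩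

/-- The linear "normalization" map killing coefficients of non-factors. -/
noncomputable def Nfil : MonoidAlgebra ℚ (FreeMonoid α) →ₗ[ℚ] MonoidAlgebra ℚ (FreeMonoid α) where
  toFun f := MonoidAlgebra.ofCoeff
    (Finsupp.filter (fun u : FreeMonoid α => FreeMonoid.toList u ∈ Fac w) f.coeff)
  map_add' _ _ := MonoidAlgebra.ext Finsupp.filter_add
  map_smul' _ _ := MonoidAlgebra.ext Finsupp.filter_smul

lemma Nfil_apply_pos (f : MonoidAlgebra ℚ (FreeMonoid α)) {v : FreeMonoid α}
    (hv : FreeMonoid.toList v ∈ Fac w) : (Nfil w f).coeff v = f.coeff v :=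
  Finsupp.filter_apply_pos _ f.coeff hv

lemma Nfil_apply_neg (f : MonoidAlgebra ℚ (FreeMonoid α)) {v : FreeMonoid α}
    (hv : FreeMonoid.toList v ∉ Fac w) : (Nfil w f).coeff v = 0 :=
  Finsupp.filter_apply_neg _ f.coeff hv

lemma Nfil_mul_zero_left {g : MonoidAlgebra ℚ (FreeMonoid α)}
    (hg : ∀ u ∈ g.coeff.support, FreeMonoid.toList u ∉ Fac w) (c : MonoidAlgebra ℚ (FreeMonoid α)) :
    Nfil w (g * c) = 0 := by
  classical
  ext v
  simp only [MonoidAlgebra.coeff_zero, Finsupp.coe_zero, Pi.zero_apply]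
  by_cases hv : FreeMonoid.toList v ∈ Fac w
  · rw [Nfil_apply_pos w _ hv, MonoidAlgebra.coeff_mul]
    apply Finset.sum_eq_zero
    intro u hu
    apply Finset.sum_eq_zero
    intro t _
    dsimp only
    rw [if_neg]
    intro heq
    rw [← heq] at hv
    exact hg u hu (fac_of_mul_fac w hv)
  · rw [Nfil_apply_neg w _ hv]

lemma Nfil_mul_zero_right {g : MonoidAlgebra ℚ (FreeMonoid α)}
    (hg : ∀ u ∈ g.coeff.support, FreeMonoid.toList u ∉ Fac w) (c : MonoidAlgebra ℚ (FreeMonoid α)) :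
    Nfil w (c * g) = 0 := by
  classical
  ext v
  simp only [MonoidAlgebra.coeff_zero, Finsupp.coe_zero, Pi.zero_apply]
  by_cases hv : FreeMonoid.toList v ∈ Fac w
  · rw [Nfil_apply_pos w _ hv, MonoidAlgebra.coeff_mul]
    apply Finset.sum_eq_zero
    intro u _
    apply Finset.sum_eq_zero
    intro t ht
    dsimp only
    rw [if_neg]
    intro heq
    rw [← heq] at hv
    exact hg t ht (fac_of_mul_fac' w hv)
  · rw [Nfil_apply_neg w _ hv]

lemma support_filter_neg_not_fac (f : MonoidAlgebra ℚ (FreeMonoid α)) :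
    ∀ u ∈ (Finsupp.filter (fun u : FreeMonoid α => ¬ FreeMonoid.toList u ∈ Fac w) f.coeff).support,
      FreeMonoid.toList u ∉ Fac w := by
  intro u hu
  rw [Finsupp.support_filter, Finset.mem_filter] at hu
  exact hu.2

lemma split_filter (p : MonoidAlgebra ℚ (FreeMonoid α)) :
    p = MonoidAlgebra.ofCoeff (Finsupp.filter (fun u : FreeMonoid α =>
      FreeMonoid.toList u ∈ Fac w) p.coeff) + MonoidAlgebra.ofCoeff (Finsupp.filter
      (fun u : FreeMonoid α => ¬ FreeMonoid.toList u ∈ Fac w) p.coeff) := by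
  rw [← MonoidAlgebra.ofCoeff_add, Finsupp.filter_pos_add_filter_neg]

lemma Nfil_mul_left {a b : MonoidAlgebra ℚ (FreeMonoid α)} (h : Nfil w a = Nfil w b)
    (c : MonoidAlgebra ℚ (FreeMonoid α)) : Nfil w (a * c) = Nfil w (b * c) := by
  have key : ∀ p : MonoidAlgebra ℚ (FreeMonoid α), Nfil w (p * c) = Nfil w (Nfil w p * c) := by
    intro p
    conv_lhs => rw [split_filter w p]
    rw [add_mul, map_add]
    rw [Nfil_mul_zero_left w (g := MonoidAlgebra.ofCoeff (Finsupp.filter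
      (fun u : FreeMonoid α => ¬ FreeMonoid.toList u ∈ Fac w) p.coeff)) (support_filter_neg_not_fac w p) c, add_zero]
    rfl
  rw [key a, key b, h]

lemma Nfil_mul_right {a b : MonoidAlgebra ℚ (FreeMonoid α)} (h : Nfil w a = Nfil w b)
    (c : MonoidAlgebra ℚ (FreeMonoid α)) : Nfil w (c * a) = Nfil w (c * b) := by
  have key : ∀ p : MonoidAlgebra ℚ (FreeMonoid α), Nfil w (c * p) = Nfil w (c * Nfil w p) := by
    intro p
    conv_lhs => rw [split_filter w p]
    rw [mul_add, map_add]
    rw [Nfil_mul_zero_right w (g := MonoidAlgebra.ofCoeff (Finsupp.filter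
      (fun u : FreeMonoid α => ¬ FreeMonoid.toList u ∈ Fac w) p.coeff)) (support_filter_neg_not_fac w p) c, add_zero]
    rfl
  rw [key a, key b, h]

lemma Nfil_single_not_fac {u : FreeMonoid α} (hu : FreeMonoid.toList u ∉ Fac w) (r : ℚ) :
    Nfil w (MonoidAlgebra.single u r) = 0 :=
  MonoidAlgebra.ext (Finsupp.filter_single_of_neg _ hu)

lemma Nfil_single_fac {u : FreeMonoid α} (hu : FreeMonoid.toList u ∈ Fac w) (r : ℚ) :
    Nfil w (MonoidAlgebra.single u r) = MonoidAlgebra.single u r :=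
  MonoidAlgebra.ext (Finsupp.filter_single_of_pos _ hu)

lemma rel_Nfil {a b : MonoidAlgebra ℚ (FreeMonoid α)}
    (h : RingQuot.Rel (FacAlgRel w) a b) : Nfil w a = Nfil w b := by
  induction h with
  | of h =>
    obtain ⟨u, hu, rfl, rfl⟩ := h
    rw [map_zero, MonoidAlgebra.of_apply, Nfil_single_not_fac w hu]
  | add_left _ ih => rw [map_add, map_add, ih]
  | mul_left _ ih => exact Nfil_mul_left w ih _
  | mul_right _ ih => exact Nfil_mul_right w ih _

/-- The coefficient-extraction linear map out of the factor algebra. -/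
noncomputable def FL : FacAlg w →ₗ[ℚ] MonoidAlgebra ℚ (FreeMonoid α) where
  toFun z := Quot.lift (⇑(Nfil w)) (fun _ _ h => rel_Nfil w h) z.toQuot
  map_add' := by
    rintro ⟨⟨y⟩⟩ ⟨⟨z⟩⟩
    rw [RingQuot.add_quot]
    exact map_add (Nfil w) y z
  map_smul' := by
    rintro c ⟨⟨z⟩⟩
    rw [RingQuot.smul_quot]
    exact map_smul (Nfil w) c z

lemma FL_mk (x : MonoidAlgebra ℚ (FreeMonoid α)) :
    FL w (RingQuot.mkAlgHom ℚ (FacAlgRel w) x) = Nfil w x := by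
  have h : RingQuot.mkAlgHom ℚ (FacAlgRel w) x = RingQuot.mkRingHom (FacAlgRel w) x := by
    rw [← RingQuot.mkAlgHom_coe ℚ]; rfl
  rw [h, RingQuot.mkRingHom_def]
  rfl

lemma mk_zero_of_support {g : MonoidAlgebra ℚ (FreeMonoid α)}
    (hg : ∀ u ∈ g.coeff.support, FreeMonoid.toList u ∉ Fac w) :
    RingQuot.mkAlgHom ℚ (FacAlgRel w) g = 0 := by
  conv_lhs => rw [← MonoidAlgebra.sum_coeff_single g]
  rw [map_finsuppSum]
  apply Finset.sum_eq_zero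
  intro u hu
  have h1 : MonoidAlgebra.single u (g.coeff u) = g.coeff u • MonoidAlgebra.single u (1 : ℚ) := by
    rw [MonoidAlgebra.smul_single, smul_eq_mul, mul_one]
  have h0 : RingQuot.mkAlgHom ℚ (FacAlgRel w) (MonoidAlgebra.single u (1 : ℚ)) = 0 := by
    have := RingQuot.mkAlgHom_rel ℚ (s := FacAlgRel w) ⟨u, hg u hu, rfl, rfl⟩
    rwa [map_zero, MonoidAlgebra.of_apply] at this
  show RingQuot.mkAlgHom ℚ (FacAlgRel w) (MonoidAlgebra.single u (g.coeff u)) = 0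
  rw [h1, map_smul, h0, smul_zero]

lemma mk_Nfil (p : MonoidAlgebra ℚ (FreeMonoid α)) :
    RingQuot.mkAlgHom ℚ (FacAlgRel w) (Nfil w p) = RingQuot.mkAlgHom ℚ (FacAlgRel w) p := by
  conv_rhs => rw [split_filter w p]
  rw [map_add, mk_zero_of_support w (g := MonoidAlgebra.ofCoeff (Finsupp.filter
      (fun u : FreeMonoid α => ¬ FreeMonoid.toList u ∈ Fac w) p.coeff)) (support_filter_neg_not_fac w p),
    add_zero]
  rfl

end Aux

section Pow

variable (w : ℕ → α) [Fintype α]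

/-- The sum of the letters in the monoid algebra. -/
noncomputable def qel : MonoidAlgebra ℚ (FreeMonoid α) :=
  ∑ a : α, MonoidAlgebra.of ℚ (FreeMonoid α) (FreeMonoid.ofList [a])

lemma qel_pow (n : ℕ) :
    qel (α := α) ^ n = ∑ m : Fin n → α,
      MonoidAlgebra.of ℚ (FreeMonoid α) (FreeMonoid.ofList (List.ofFn m)) := by
  induction n with
  | zero =>
    rw [pow_zero, Fintype.sum_unique]
    simp only [List.ofFn_zero]
    exact (map_one (MonoidAlgebra.of ℚ (FreeMonoid α))).symm
  | succ n ih =>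
    rw [pow_succ', ih, qel, Finset.sum_mul_sum]
    rw [← Fintype.sum_prod_type']
    apply Fintype.sum_equiv (Fin.consEquiv (fun _ : Fin (n + 1) => α))
    intro ⟨a, m⟩
    rw [← map_mul]
    congr 1
    apply FreeMonoid.toList.injective
    simp only [FreeMonoid.toList_mul, FreeMonoid.toList_ofList]
    rw [List.ofFn_succ]
    simp [Fin.consEquiv]

lemma qel_pow_apply_len (l : List α) :
    (qel (α := α) ^ l.length).coeff (FreeMonoid.ofList l) = 1 := by
  classical
  rw [qel_pow]
  rw [MonoidAlgebra.coeff_sum, Finsupp.finset_sum_apply]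
  have hcond : ∀ m : Fin l.length → α,
      (MonoidAlgebra.of ℚ (FreeMonoid α) (FreeMonoid.ofList (List.ofFn m))).coeff
        (FreeMonoid.ofList l)
      = if m = l.get then 1 else 0 := by
    intro m
    rw [MonoidAlgebra.of_apply, MonoidAlgebra.coeff_single, Finsupp.single_apply]
    congr 1
    simp only [eq_iff_iff]
    constructor
    · intro h
      have h2 : List.ofFn m = List.ofFn l.get := by
        rw [List.ofFn_get]; exact FreeMonoid.ofList.injective h
      exact List.ofFn_inj.1 h2
    · rintro rfl
      rw [List.ofFn_get]
  simp only [hcond]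
  rw [Finset.sum_ite_eq']
  simp

lemma qel_pow_apply_ne {n : ℕ} {v : FreeMonoid α} (h : (FreeMonoid.toList v).length ≠ n) :
    (qel (α := α) ^ n).coeff v = 0 := by
  classical
  rw [qel_pow, MonoidAlgebra.coeff_sum, Finsupp.finset_sum_apply]
  apply Finset.sum_eq_zero
  intro m _
  rw [MonoidAlgebra.of_apply, MonoidAlgebra.coeff_single, Finsupp.single_apply, if_neg]
  intro heq
  apply h
  rw [← heq, FreeMonoid.toList_ofList, List.length_ofFn]

end Pow


section Mul

variable (w : ℕ → α)

lemma mul_single_apply_ne (f : MonoidAlgebra ℚ (FreeMonoid α)) {x y : FreeMonoid α} (r : ℚ)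
    (H : ∀ a, a * x ≠ y) : (f * MonoidAlgebra.single x r).coeff y = 0 :=
  MonoidAlgebra.coeff_mul_single_of_forall_mul_ne r f H

lemma single_mul_apply_ne (f : MonoidAlgebra ℚ (FreeMonoid α)) {x y : FreeMonoid α} (r : ℚ)
    (H : ∀ a, x * a ≠ y) : (MonoidAlgebra.single x r * f).coeff y = 0 :=
  MonoidAlgebra.coeff_single_mul_of_forall_mul_ne r f H

variable [Fintype α]

lemma mul_qel_apply (f : MonoidAlgebra ℚ (FreeMonoid α)) (l : List α) (a₀ : α) :
    (f * qel (α := α)).coeff (FreeMonoid.ofList (l ++ [a₀])) = f.coeff (FreeMonoid.ofList l) := by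
  classical
  rw [qel, Finset.mul_sum, MonoidAlgebra.coeff_sum, Finsupp.finset_sum_apply]
  rw [Finset.sum_eq_single a₀]
  · rw [MonoidAlgebra.of_apply,
      MonoidAlgebra.coeff_mul_single_eq_coeff_mul (x := f) (m := FreeMonoid.ofList [a₀])
        (m₁ := FreeMonoid.ofList (l ++ [a₀])) (FreeMonoid.ofList l) ?_, mul_one]
    intro u _
    constructor
    · intro h
      have h2 : FreeMonoid.toList u ++ [a₀] = l ++ [a₀] := by
        have := congrArg FreeMonoid.toList h
        simpa [FreeMonoid.toList_mul] using this
      have := (List.append_inj' h2 rfl).1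
      rw [← this, FreeMonoid.ofList_toList]
    · rintro rfl
      rfl
  · intro a _ ha
    rw [MonoidAlgebra.of_apply, mul_single_apply_ne f 1]
    intro u h
    have h2 : FreeMonoid.toList u ++ [a] = l ++ [a₀] := by
      have := congrArg FreeMonoid.toList h
      simpa [FreeMonoid.toList_mul] using this
    exact ha (List.head_eq_of_cons_eq (List.append_inj' h2 rfl).2)
  · intro h
    exact absurd (Finset.mem_univ a₀) h

lemma qel_mul_apply (f : MonoidAlgebra ℚ (FreeMonoid α)) (l : List α) (b₀ : α) :
    (qel (α := α) * f).coeff (FreeMonoid.ofList (b₀ :: l)) = f.coeff (FreeMonoid.ofList l) := by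
  classical
  rw [qel, Finset.sum_mul, MonoidAlgebra.coeff_sum, Finsupp.finset_sum_apply]
  rw [Finset.sum_eq_single b₀]
  · rw [MonoidAlgebra.of_apply,
      MonoidAlgebra.coeff_single_mul_eq_mul_coeff (x := f) (m := FreeMonoid.ofList [b₀])
        (m₁ := FreeMonoid.ofList (b₀ :: l)) (FreeMonoid.ofList l) ?_, one_mul]
    intro u _
    constructor
    · intro h
      have h2 : b₀ :: FreeMonoid.toList u = b₀ :: l := by
        have := congrArg FreeMonoid.toList h
        simpa [FreeMonoid.toList_mul] using this
      have := List.tail_eq_of_cons_eq h2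
      rw [← this, FreeMonoid.ofList_toList]
    · rintro rfl
      rfl
  · intro a _ ha
    rw [MonoidAlgebra.of_apply, single_mul_apply_ne f 1]
    intro u h
    have h2 : a :: FreeMonoid.toList u = b₀ :: l := by
      have := congrArg FreeMonoid.toList h
      simpa [FreeMonoid.toList_mul] using this
    exact ha (List.head_eq_of_cons_eq h2)
  · intro h
    exact absurd (Finset.mem_univ b₀) h

end Mul

section Chain

variable (w : ℕ → α)

lemma Wd_succ_right (i m : ℕ) : Wd w i (m + 1) = Wd w i m ++ [w (i + m)] := by
  rw [Wd, Wd, List.range_succ, List.map_append]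
  rfl

lemma Wd_succ_left (i m : ℕ) : Wd w i (m + 1) = w i :: Wd w (i + 1) m := by
  apply List.ext_getElem
  · simp [Wd]
  intro j hj hj'
  simp only [Wd, List.getElem_map, List.getElem_range]
  cases j with
  | zero => simp
  | succ j =>
    simp only [List.getElem_cons_succ, Wd, List.getElem_map, List.getElem_range]
    congr 1
    omega

variable [Fintype α]

lemma chain_step {n : ℕ} {f : MonoidAlgebra ℚ (FreeMonoid α)}
    (hcomm : Nfil w (f * qel (α := α)) = Nfil w (qel (α := α) * f)) (i : ℕ) :
    f.coeff (FreeMonoid.ofList (Wd w i n)) = f.coeff (FreeMonoid.ofList (Wd w (i + 1) n)) := by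
  have hfac : FreeMonoid.toList (FreeMonoid.ofList (Wd w i (n + 1))) ∈ Fac w := by
    rw [FreeMonoid.toList_ofList]; exact Wd_mem w i (n + 1)
  have h1 : (Nfil w (f * qel (α := α))).coeff (FreeMonoid.ofList (Wd w i (n + 1)))
      = (Nfil w (qel (α := α) * f)).coeff (FreeMonoid.ofList (Wd w i (n + 1))) := by rw [hcomm]
  rw [Nfil_apply_pos w _ hfac, Nfil_apply_pos w _ hfac] at h1
  calc f.coeff (FreeMonoid.ofList (Wd w i n))
      = (f * qel (α := α)).coeff (FreeMonoid.ofList (Wd w i (n + 1))) := by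
        rw [Wd_succ_right, mul_qel_apply]
    _ = (qel (α := α) * f).coeff (FreeMonoid.ofList (Wd w i (n + 1))) := h1
    _ = f.coeff (FreeMonoid.ofList (Wd w (i + 1) n)) := by
        rw [Wd_succ_left, qel_mul_apply]

lemma chain {n : ℕ} {f : MonoidAlgebra ℚ (FreeMonoid α)}
    (hcomm : Nfil w (f * qel (α := α)) = Nfil w (qel (α := α) * f)) (i : ℕ) :
    f.coeff (FreeMonoid.ofList (Wd w i n)) = f.coeff (FreeMonoid.ofList (Wd w 0 n)) := by
  induction i with
  | zero => rfl
  | succ i ih => rw [← chain_step w hcomm i, ih]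

end Chain

theorem ker_phi_eq_span_xn [Fintype α] (w : ℕ → α) (n : ℕ) :
    (∀ z ∈ Vspace w n,
        (z * (∑ a : α, facCls w [a]) - (∑ a : α, facCls w [a]) * z = 0 ↔
          ∃ c : ℚ, z = c • (∑ a : α, facCls w [a]) ^ n)) ∧
      (∑ a : α, facCls w [a]) ^ n ≠ 0 := by
  have hx : (∑ a : α, facCls w [a]) = RingQuot.mkAlgHom ℚ (FacAlgRel w) (qel (α := α)) := by
    rw [qel, map_sum]
    rfl
  constructor
  · intro z hz
    constructor
    · intro hcomm
      obtain ⟨p, hp⟩ := RingQuot.mkAlgHom_surjective ℚ (FacAlgRel w) z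
      set f := FL w z with hfdef
      have hfN : f = Nfil w p := by rw [hfdef, ← hp, FL_mk]
      have hmkf : RingQuot.mkAlgHom ℚ (FacAlgRel w) f = z := by
        rw [hfN, mk_Nfil, hp]
      have hT0 : ∀ y ∈ Vspace w n, ∀ v : FreeMonoid α,
          ¬ (FreeMonoid.toList v ∈ Fac w ∧ (FreeMonoid.toList v).length = n) →
            (FL w y).coeff v = 0 := by
        classical
        intro y hy
        induction hy using Submodule.span_induction with
        | mem x hxS =>
          obtain ⟨u, hu, hlen, rfl⟩ := hxS
          intro v hv
          rw [facCls, FL_mk, MonoidAlgebra.of_apply,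
            Nfil_single_fac w (by rwa [FreeMonoid.toList_ofList]) 1,
            MonoidAlgebra.coeff_single, Finsupp.single_apply, if_neg]
          rintro rfl
          exact hv ⟨by rwa [FreeMonoid.toList_ofList], by rwa [FreeMonoid.toList_ofList]⟩
        | zero => intro v hv; rw [map_zero]; rfl
        | add x y _ _ ihx ihy =>
          intro v hv
          rw [map_add, MonoidAlgebra.coeff_add, Finsupp.add_apply, ihx v hv, ihy v hv, add_zero]
        | smul c x _ ihx =>
          intro v hv
          rw [map_smul, MonoidAlgebra.coeff_smul, Finsupp.smul_apply, ihx v hv, smul_zero]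
      have hT : ∀ v : FreeMonoid α,
          ¬ (FreeMonoid.toList v ∈ Fac w ∧ (FreeMonoid.toList v).length = n) → f.coeff v = 0 := by
        intro v hv
        rw [hfdef]
        exact hT0 z hz v hv
      have hcomm' : RingQuot.mkAlgHom ℚ (FacAlgRel w) (f * qel (α := α))
          = RingQuot.mkAlgHom ℚ (FacAlgRel w) (qel (α := α) * f) := by
        rw [map_mul, map_mul, hmkf, ← hx]
        exact sub_eq_zero.mp hcomm
      have hq : Nfil w (f * qel (α := α)) = Nfil w (qel (α := α) * f) := by
        have := congrArg (FL w) hcomm'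
        rwa [FL_mk, FL_mk] at this
      refine ⟨f.coeff (FreeMonoid.ofList (Wd w 0 n)), ?_⟩
      have hfeq : f = Nfil w ((f.coeff (FreeMonoid.ofList (Wd w 0 n))) • (qel (α := α)) ^ n) := by
        ext v
        by_cases hvf : FreeMonoid.toList v ∈ Fac w
        · rw [Nfil_apply_pos w _ hvf, MonoidAlgebra.coeff_smul, Finsupp.smul_apply]
          by_cases hlen : (FreeMonoid.toList v).length = n
          · obtain ⟨i, hi⟩ := hvf
            have hvW : FreeMonoid.toList v = Wd w i n := by rw [← hlen]; exact hi
            have h1 : f.coeff v = f.coeff (FreeMonoid.ofList (Wd w 0 n)) := by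
              conv_lhs => rw [← FreeMonoid.ofList_toList v, hvW]
              exact chain w hq i
            have h2 : ((qel (α := α)) ^ n).coeff v = 1 := by
              conv_lhs => rw [← hlen, ← FreeMonoid.ofList_toList v]
              exact qel_pow_apply_len (FreeMonoid.toList v)
            rw [h1, h2, smul_eq_mul, mul_one]
          · rw [hT v (by tauto), qel_pow_apply_ne hlen, smul_zero]
        · rw [Nfil_apply_neg w _ hvf, hT v (by tauto)]
      rw [← hmkf]
      conv_lhs => rw [hfeq]
      rw [mk_Nfil, map_smul, map_pow, ← hx]
    · rintro ⟨c, rfl⟩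
      rw [smul_mul_assoc, mul_smul_comm, ← pow_succ, ← pow_succ', sub_self]
  · intro h0
    have h1 : FL w ((∑ a : α, facCls w [a]) ^ n) = Nfil w ((qel (α := α)) ^ n) := by
      rw [hx, ← map_pow, FL_mk]
    rw [h0, map_zero] at h1
    have h2 : (Nfil w ((qel (α := α)) ^ n)).coeff (FreeMonoid.ofList (Wd w 0 n)) = 1 := by
      rw [Nfil_apply_pos w _ (by rw [FreeMonoid.toList_ofList]; exact Wd_mem w 0 n)]
      have := qel_pow_apply_len (α := α) (Wd w 0 n)
      rwa [Wd_length] at this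
    rw [← h1] at h2
    simp at h2
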